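/- Let {B_{ab}^{IJ}} be a discrete Plebanski field (antisymmetric in ab, satisfying closure at every a) on a nondegenerate ordered 4-simplex σ in ℝ⁴, and let {I_{ab}^{μν}} be the corresponding geometric triangle bivectors, which also satisfy antisymmetry and closure and whose restriction to pairs 0 ≤ i < j ≤ 3 forms a basis of Λ²ℝ⁴. Then there exists a unique constant so(4)-valued 2-form B_{μν}^{IJ} such that I_{ab}^{μν}B_{μν}^{IJ} = B_{ab}^{IJ} for all a ≠ b. -/

import Mathlib

noncomputable section

/-- The 6-dimensional space Λ²ℝ⁴ of antisymmetric tensors on ℝ⁴ (used both for the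
space of bivectors in the spacetime indices μν and for so(4) in the internal
indices IJ). -/
def AntisymSub : Submodule ℝ (Fin 4 → Fin 4 → ℝ) where
  carrier := {A | ∀ i j, A i j = - A j i}
  add_mem' := by
    intro a b ha hb i j
    simp only [Pi.add_apply]
    rw [ha i j, hb i j]; ring
  zero_mem' := by intro i j; simp
  smul_mem' := by
    intro c a ha i j
    simp only [Pi.smul_apply, smul_eq_mul]
    rw [ha i j]; ring

/-- Let {B_{ab}} be a discrete Plebanski field (antisymmetric in ab, closure at
every a) valued in so(4), and {I_{ab}} the triangle bivectors of a nondegenerate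
ordered 4-simplex, also antisymmetric and satisfying closure, such that
{I_{ij} : 0 ≤ i < j ≤ 3} is a basis of Λ²ℝ⁴.  Then there is a unique constant
so(4)-valued two-form, i.e. a unique linear map Λ²ℝ⁴ → so(4), sending I_{ab} to
B_{ab} for all a ≠ b. -/
theorem unique_constant_two_form
    (B I : Fin 5 → Fin 5 → AntisymSub)
    (hBorient : ∀ a b, B a b = - B b a)
    (hBclosure : ∀ a : Fin 5, ∑ b ∈ Finset.univ.erase a, B a b = 0)
    (hIorient : ∀ a b, I a b = - I b a)
    (hIclosure : ∀ a : Fin 5, ∑ b ∈ Finset.univ.erase a, I a b = 0)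
    (hIindep : LinearIndependent ℝ
      (fun p : {p : Fin 4 × Fin 4 // p.1 < p.2} =>
        I p.1.1.castSucc p.1.2.castSucc))
    (hIspan : Submodule.span ℝ
      (Set.range (fun p : {p : Fin 4 × Fin 4 // p.1 < p.2} =>
        I p.1.1.castSucc p.1.2.castSucc)) = ⊤) :
    ∃! L : AntisymSub →ₗ[ℝ] AntisymSub, ∀ a b : Fin 5, a ≠ b → L (I a b) = B a b := by
  set v : {p : Fin 4 × Fin 4 // p.1 < p.2} → AntisymSub :=
    fun p => I p.1.1.castSucc p.1.2.castSucc with hv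
  let bas : Module.Basis {p : Fin 4 × Fin 4 // p.1 < p.2} ℝ AntisymSub :=
    Module.Basis.mk hIindep (by rw [hIspan])
  let L0 : AntisymSub →ₗ[ℝ] AntisymSub :=
    bas.constr ℝ (fun p => B p.1.1.castSucc p.1.2.castSucc)
  have hL0 : ∀ p, L0 (v p) = B p.1.1.castSucc p.1.2.castSucc := by
    intro p
    have hvb : v p = bas p := by simp [bas, Module.Basis.mk_apply]
    rw [hvb]
    simp [L0, Module.Basis.constr_basis]
  have key : ∀ (L : AntisymSub →ₗ[ℝ] AntisymSub),
      (∀ p, L (v p) = B p.1.1.castSucc p.1.2.castSucc) →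
      ∀ a b : Fin 5, a ≠ b → L (I a b) = B a b := by
    intro L hL
    have hcs : ∀ i j : Fin 4, i ≠ j →
        L (I i.castSucc j.castSucc) = B i.castSucc j.castSucc := by
      intro i j hij
      rcases lt_or_gt_of_ne hij with h | h
      · exact hL ⟨(i, j), h⟩
      · have h1 := hL ⟨(j, i), h⟩
        simp only [hv] at h1
        rw [hIorient i.castSucc j.castSucc, hBorient i.castSucc j.castSucc, map_neg, h1]
    have hlast : ∀ a : Fin 5, a ≠ Fin.last 4 →
        L (I a (Fin.last 4)) = B a (Fin.last 4) := by
      intro a ha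
      have hmem : Fin.last 4 ∈ Finset.univ.erase a := by
        exact Finset.mem_erase.mpr ⟨Ne.symm ha, Finset.mem_univ _⟩
      have hI := Finset.sum_erase_add (Finset.univ.erase a) (fun c => I a c) hmem
      rw [hIclosure a] at hI
      have hB := Finset.sum_erase_add (Finset.univ.erase a) (fun c => B a c) hmem
      rw [hBclosure a] at hB
      have hIeq : I a (Fin.last 4)
          = -∑ c ∈ (Finset.univ.erase a).erase (Fin.last 4), I a c :=
        eq_neg_of_add_eq_zero_right hI
      have hBeq : B a (Fin.last 4)
          = -∑ c ∈ (Finset.univ.erase a).erase (Fin.last 4), B a c :=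
        eq_neg_of_add_eq_zero_right hB
      rw [hIeq, map_neg, map_sum, hBeq]
      congr 1
      refine Finset.sum_congr rfl ?_
      intro c hc
      rw [Finset.mem_erase, Finset.mem_erase] at hc
      obtain ⟨hc4, hca, -⟩ := hc
      obtain ⟨k, rfl⟩ := Fin.exists_castSucc_eq.mpr hc4
      obtain ⟨i, rfl⟩ := Fin.exists_castSucc_eq.mpr ha
      exact hcs i k (fun h => hca (by rw [h]))
    intro a b hab
    by_cases hb4 : b = Fin.last 4
    · subst hb4; exact hlast a hab
    · by_cases ha4 : a = Fin.last 4
      · subst ha4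
        rw [hIorient, hBorient, map_neg, hlast b hb4]
      · obtain ⟨i, rfl⟩ := Fin.exists_castSucc_eq.mpr ha4
        obtain ⟨j, rfl⟩ := Fin.exists_castSucc_eq.mpr hb4
        exact hcs i j (fun h => hab (by rw [h]))
  refine ⟨L0, key L0 hL0, ?_⟩
  intro L' hL'
  apply bas.ext
  intro p
  have hvb : bas p = v p := by simp [bas, Module.Basis.mk_apply]
  rw [hvb, hL0 p]
  exact hL' p.1.1.castSucc p.1.2.castSucc
    (fun h => absurd (Fin.castSucc_injective _ h) (ne_of_lt p.2))
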